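/- Let X be a cyclic flat of M⁺ such that Δγ(X) < 0 and there is some cyclic flat Z_X of M⁺ with Z_X ⊊ X and Δγ(Z_X) > 0. Then there exist cyclic flats Z0, Z1 of M⁺ with Z0 ⊊ X, Z1 ⊊ X, Δγ(Z0) > 0, Δγ(Z1) > 0, and Z0 ∨ Z1 = X. Similarly, if W is a cyclic flat of M⁺ with Δγ(W) > 0, then there exist cyclic flats Z0, Z1 of M⁺ with Z0 ⊊ W, Z1 ⊊ W, Δγ(Z0) < 0, Δγ(Z1) < 0, and Z0 ∨ Z1 = W. -/

import Mathlib

open Set Matroid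
open scoped Classical

namespace Paper

variable {α : Type*}

/-- A circuit of a matroid: a minimal dependent set. -/
def Circuit (M : Matroid α) (C : Set α) : Prop :=
  M.Dep C ∧ ∀ D ⊂ C, M.Indep D

/-- A coloop: an element of the ground set lying in no circuit. -/
def Coloop (M : Matroid α) (x : α) : Prop :=
  x ∈ M.E ∧ ∀ C, Circuit M C → x ∉ C

/-- The set of coloops of a matroid. -/
def coloops (M : Matroid α) : Set α := {x | Coloop M x}

/-- A cyclic set: a subset of the ground set each of whose elements lies in a
circuit contained in the set (equivalently, the restriction has no coloops). -/
def Cyclic (M : Matroid α) (X : Set α) : Prop :=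
  X ⊆ M.E ∧ ∀ x ∈ X, ∃ C, Circuit M C ∧ C ⊆ X ∧ x ∈ C

/-- A cyclic flat: a cyclic set that is also a flat. -/
def CyclicFlat (M : Matroid α) (X : Set α) : Prop :=
  Cyclic M X ∧ M.IsFlat X

/-- The rank of a set: the largest cardinality of an independent subset. -/
noncomputable def rk (M : Matroid α) (X : Set α) : ℕ :=
  sSup (Set.ncard '' {I | M.Indep I ∧ I ⊆ X})

/-- The nullity of a set: `n(X) = |X| − r(X)`. -/
noncomputable def nullity (M : Matroid α) (X : Set α) : ℤ :=
  (X.ncard : ℤ) - rk M X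

/-- Deletion of a single element: `M \ e`. -/
noncomputable def deleteElem (M : Matroid α) (e : α) : Matroid α :=
  M ↾ (M.E \ {e})

variable [Fintype α] [DecidableEq α]

/-- The `γ` function: `γ_M(X) = n(X) − Σ_{Z ∈ Z(M), Z ⊊ X} γ_M(Z)`. -/
noncomputable def gamma (M : Matroid α) (X : Finset α) : ℤ :=
  nullity M ↑X -
    ∑ Z ∈ (Finset.univ.filter (fun Z : Finset α => CyclicFlat M ↑Z ∧ Z ⊂ X)).attach,
      gamma M Z.1
termination_by X.card
decreasing_by
  exact Finset.card_lt_card (Finset.mem_filter.mp Z.2).2.2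

/-- `Δγ(X) = γ_M(X − e) − γ_{M⁺}(X)` where `M = M⁺ \ e`. -/
noncomputable def dgamma (M : Matroid α) (e : α) (X : Finset α) : ℤ :=
  gamma (deleteElem M e) (X.erase e) - gamma M X

lemma Circuit.subset_ground {M : Matroid α} {C : Set α} (h : Circuit M C) : C ⊆ M.E :=
  h.1.subset_ground

lemma exists_circuit_subset_of_dep_aux {M : Matroid α} :
    ∀ n (D : Set α), D.ncard ≤ n → M.Dep D → ∃ C, C ⊆ D ∧ Circuit M C := by
  intro n
  induction n with
  | zero =>
    intro D hcard hD
    have hD0 : D = ∅ := by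
      rw [← Set.ncard_eq_zero (Set.toFinite D)]; omega
    exact absurd (hD0 ▸ M.empty_indep) hD.not_indep
  | succ n ih =>
    intro D hcard hD
    by_cases h : ∀ D' ⊂ D, M.Indep D'
    · exact ⟨D, Set.Subset.rfl, hD, h⟩
    · push_neg at h
      obtain ⟨D', hss, hdep⟩ := h
      have hD' : M.Dep D' := ⟨hdep, hss.subset.trans hD.subset_ground⟩
      have hcard' : D'.ncard ≤ n := by
        have := Set.ncard_lt_ncard hss (Set.toFinite D)
        omega
      obtain ⟨C, hCD, hC⟩ := ih D' hcard' hD'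
      exact ⟨C, hCD.trans hss.subset, hC⟩

lemma exists_circuit_subset_of_dep {M : Matroid α} {D : Set α} (hD : M.Dep D) :
    ∃ C, C ⊆ D ∧ Circuit M C :=
  exists_circuit_subset_of_dep_aux D.ncard D le_rfl hD

/-- A fundamental-circuit style lemma. -/
lemma exists_circuit_of_mem_closure {M : Matroid α} {Y : Set α} {x : α}
    (hY : Y ⊆ M.E) (hx : x ∈ M.closure Y) (hxY : x ∉ Y) :
    ∃ C, Circuit M C ∧ C ⊆ insert x Y ∧ x ∈ C := by
  obtain ⟨I, hI⟩ := M.exists_isBasis Y hY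
  have hxI : x ∉ I := fun h => hxY (hI.subset h)
  have hxclI : x ∈ M.closure I := by rwa [hI.closure_eq_closure]
  have hdep : M.Dep (insert x I) := by
    rwa [hI.indep.mem_closure_iff_of_notMem hxI] at hxclI
  obtain ⟨C, hCsub, hC⟩ := exists_circuit_subset_of_dep hdep
  refine ⟨C, hC, hCsub.trans (insert_subset_insert hI.subset), ?_⟩
  by_contra hxC
  have hCI : C ⊆ I := fun y hy => by
    rcases hCsub hy with h | h
    · exact absurd (h ▸ hy) hxC
    · exact h
  exact hC.1.not_indep (hI.indep.subset hCI)

lemma Circuit.mem_closure_diff {M : Matroid α} {C : Set α} {x : α}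
    (hC : Circuit M C) (hx : x ∈ C) : x ∈ M.closure (C \ {x}) := by
  have hindep : M.Indep (C \ {x}) := hC.2 _ (Set.sdiff_singleton_ssubset.mpr hx)
  by_contra hcl
  have hxE : x ∈ M.E := hC.subset_ground hx
  rw [hindep.notMem_closure_iff hxE] at hcl
  have : insert x (C \ {x}) = C := Set.insert_diff_singleton.trans (Set.insert_eq_of_mem hx)
  exact hC.1.not_indep (this ▸ hcl.1)


@[simp] lemma deleteElem_ground (M : Matroid α) (e : α) :
    (deleteElem M e).E = M.E \ {e} := rfl

lemma deleteElem_indep_iff {M : Matroid α} {e : α} {I : Set α} :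
    (deleteElem M e).Indep I ↔ M.Indep I ∧ e ∉ I := by
  rw [deleteElem, restrict_indep_iff]
  constructor
  · rintro ⟨h1, h2⟩; exact ⟨h1, fun he => (h2 he).2 rfl⟩
  · rintro ⟨h1, h2⟩
    exact ⟨h1, fun y hy => ⟨h1.subset_ground hy, fun (h : y = e) => h2 (h ▸ hy)⟩⟩

lemma deleteElem_basis {M : Matroid α} {e : α} {I Y : Set α}
    (hY : Y ⊆ M.E \ {e}) (hI : M.IsBasis I Y) : (deleteElem M e).IsBasis I Y := by
  rw [deleteElem, isBasis_restrict_iff']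
  rw [Set.inter_eq_self_of_subset_left (hY.trans diff_subset)]
  exact ⟨hI, hY⟩

lemma deleteElem_closure {M : Matroid α} {e : α} {Y : Set α} (hY : Y ⊆ M.E \ {e}) :
    (deleteElem M e).closure Y = M.closure Y \ {e} := by
  obtain ⟨I, hI⟩ := M.exists_isBasis Y (hY.trans diff_subset)
  have hI' := deleteElem_basis hY hI
  rw [← hI'.closure_eq_closure, ← hI.closure_eq_closure]
  have hIind : (deleteElem M e).Indep I := hI'.indep
  ext x
  rw [Set.mem_diff, hIind.mem_closure_iff', hI.indep.mem_closure_iff']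
  simp only [deleteElem_ground, Set.mem_diff, Set.mem_singleton_iff, deleteElem_indep_iff]
  constructor
  · rintro ⟨⟨hxE, hxe⟩, h⟩
    refine ⟨⟨hxE, fun hind => h ⟨hind, ?_⟩⟩, hxe⟩
    rintro (rfl | hmem)
    · exact hxe rfl
    · exact ((hY (hI.subset hmem)).2) rfl
  · rintro ⟨⟨hxE, h⟩, hxe⟩
    exact ⟨⟨hxE, hxe⟩, fun hind => h hind.1⟩

lemma deleteElem_circuit_iff {M : Matroid α} {e : α} {C : Set α} (heC : e ∉ C) :
    Circuit (deleteElem M e) C ↔ Circuit M C := by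
  constructor
  · rintro ⟨hdep, hmin⟩
    rw [deleteElem, restrict_dep_iff] at hdep
    refine ⟨⟨hdep.1, hdep.2.trans diff_subset⟩, fun D hD => (hmin D hD).1⟩
  · rintro ⟨hdep, hmin⟩
    refine ⟨?_, fun D hD => (hmin D hD).indep_restrict_of_subset ?_⟩
    · rw [deleteElem, restrict_dep_iff]
      refine ⟨hdep.not_indep, fun y hy => ⟨hdep.subset_ground hy, fun (h : y = e) => heC (h ▸ hy)⟩⟩
    · intro y hy
      exact ⟨hdep.subset_ground (hD.subset hy), fun (h : y = e) => heC (h ▸ hD.subset hy)⟩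

lemma rk_eq_of_basis' {M : Matroid α} {I X : Set α} (hI : M.IsBasis' I X) :
    rk M X = I.ncard := by
  apply IsGreatest.csSup_eq
  constructor
  · exact ⟨I, ⟨hI.indep, hI.subset⟩, rfl⟩
  · rintro n ⟨J, ⟨hJind, hJX⟩, rfl⟩
    obtain ⟨J', hJ', hJJ'⟩ := hJind.subset_isBasis'_of_subset hJX
    have h1 : J.ncard ≤ J'.ncard := Set.ncard_le_ncard hJJ' (Set.toFinite J')
    have h2 : J'.encard = I.encard := hJ'.encard_eq_encard hI
    have h3 : J'.ncard = I.ncard := by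
      rw [Set.ncard_def, h2, ← Set.ncard_def]
    omega

lemma rk_eq_of_basis {M : Matroid α} {I X : Set α} (hI : M.IsBasis I X) :
    rk M X = I.ncard := rk_eq_of_basis' hI.isBasis'

lemma rk_eq_rk_diff_of_mem_closure {M : Matroid α} {X : Set α} {e : α}
    (hX : X ⊆ M.E) (he : e ∈ M.closure (X \ {e})) :
    rk M X = rk M (X \ {e}) := by
  obtain ⟨I, hI⟩ := M.exists_isBasis (X \ {e}) ((diff_subset).trans hX)
  rw [rk_eq_of_basis hI]
  have hIbX : M.IsBasis I X := by
    refine hI.indep.isBasis_of_subset_of_subset_closure (hI.subset.trans diff_subset) ?_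
    rw [hI.closure_eq_closure]
    intro x hx
    by_cases hxe : x = e
    · subst hxe; exact he
    · exact M.subset_closure _ (diff_subset.trans hX) ⟨hx, hxe⟩
  rw [rk_eq_of_basis hIbX]

lemma rk_insert_of_not_mem_closure {M : Matroid α} {Y : Set α} {x : α}
    (hY : Y ⊆ M.E) (hxE : x ∈ M.E) (hx : x ∉ M.closure Y) :
    rk M (insert x Y) = rk M Y + 1 := by
  obtain ⟨I, hI⟩ := M.exists_isBasis Y hY
  have hxclI : x ∉ M.closure I := by rwa [hI.closure_eq_closure]
  have hxI : x ∉ I := fun h => hxclI (M.subset_closure I hI.indep.subset_ground h)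
  have hins : M.Indep (insert x I) := by
    rw [hI.indep.notMem_closure_iff hxE] at hxclI
    exact hxclI.1
  have hbasis : M.IsBasis (insert x I) (insert x Y) := by
    refine hins.isBasis_of_subset_of_subset_closure (insert_subset_insert hI.subset) ?_
    refine insert_subset (M.subset_closure _ hins.subset_ground (mem_insert _ _)) ?_
    refine (hI.subset_closure).trans (M.closure_subset_closure (subset_insert _ _))
  rw [rk_eq_of_basis hI, rk_eq_of_basis hbasis, Set.ncard_insert_of_notMem hxI (Set.toFinite I)]

lemma rk_deleteElem_eq {M : Matroid α} {e : α} {Y : Set α} (hY : Y ⊆ M.E \ {e}) :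
    rk (deleteElem M e) Y = rk M Y := by
  obtain ⟨I, hI⟩ := M.exists_isBasis Y (hY.trans diff_subset)
  rw [rk_eq_of_basis (deleteElem_basis hY hI), rk_eq_of_basis hI]


lemma flat_closure (M : Matroid α) (X : Set α) : M.IsFlat (M.closure X) := by
  rw [closure_def]
  have hne : Nonempty {F // F ∈ {F | M.IsFlat F ∧ X ∩ M.E ⊆ F}} :=
    ⟨⟨M.E, M.ground_isFlat, Set.inter_subset_right⟩⟩
  rw [Set.sInter_eq_iInter]
  exact IsFlat.iInter (fun F => F.2.1)

lemma flat_of_closure_subset {M : Matroid α} {Y : Set α} (hY : Y ⊆ M.E)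
    (h : M.closure Y ⊆ Y) : M.IsFlat Y := by
  have : M.closure Y = Y := Set.Subset.antisymm h (M.subset_closure Y hY)
  exact this ▸ flat_closure M Y

lemma Cyclic.union {M : Matroid α} {A B : Set α} (hA : Cyclic M A) (hB : Cyclic M B) :
    Cyclic M (A ∪ B) := by
  refine ⟨Set.union_subset hA.1 hB.1, fun x hx => ?_⟩
  rcases hx with h | h
  · obtain ⟨C, hC, hCs, hxC⟩ := hA.2 x h
    exact ⟨C, hC, hCs.trans Set.subset_union_left, hxC⟩
  · obtain ⟨C, hC, hCs, hxC⟩ := hB.2 x h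
    exact ⟨C, hC, hCs.trans Set.subset_union_right, hxC⟩

lemma Cyclic.closure {M : Matroid α} {A : Set α} (hA : Cyclic M A) :
    Cyclic M (M.closure A) := by
  refine ⟨M.closure_subset_ground A, fun x hx => ?_⟩
  by_cases hxA : x ∈ A
  · obtain ⟨C, hC, hCs, hxC⟩ := hA.2 x hxA
    exact ⟨C, hC, hCs.trans (M.subset_closure A hA.1), hxC⟩
  · obtain ⟨C, hC, hCs, hxC⟩ := exists_circuit_of_mem_closure hA.1 hx hxA
    exact ⟨C, hC, hCs.trans (Set.insert_subset hx (M.subset_closure A hA.1)), hxC⟩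

lemma CyclicFlat.join {M : Matroid α} {Z0 Z1 : Set α}
    (h0 : CyclicFlat M Z0) (h1 : CyclicFlat M Z1) :
    CyclicFlat M (M.closure (Z0 ∪ Z1)) :=
  ⟨(h0.1.union h1.1).closure, flat_closure M _⟩

/-- The cyclic core of a set: union of all circuits inside it. -/
def cyc (M : Matroid α) (Y : Set α) : Set α :=
  {x ∈ Y | ∃ C, Circuit M C ∧ C ⊆ Y ∧ x ∈ C}

lemma cyc_subset (M : Matroid α) (Y : Set α) : cyc M Y ⊆ Y := fun _ h => h.1

lemma cyc_cyclic {M : Matroid α} {Y : Set α} (hY : Y ⊆ M.E) : Cyclic M (cyc M Y) := by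
  refine ⟨(cyc_subset M Y).trans hY, fun x hx => ?_⟩
  obtain ⟨hxY, C, hC, hCY, hxC⟩ := hx
  exact ⟨C, hC, fun y hy => ⟨hCY hy, C, hC, hCY, hy⟩, hxC⟩

lemma cyclic_subset_cyc {M : Matroid α} {Z Y : Set α} (hZ : Cyclic M Z) (hZY : Z ⊆ Y) :
    Z ⊆ cyc M Y := by
  intro x hx
  obtain ⟨C, hC, hCZ, hxC⟩ := hZ.2 x hx
  exact ⟨hZY hx, C, hC, hCZ.trans hZY, hxC⟩

lemma cyc_flat {M : Matroid α} {Y : Set α} (hY : M.IsFlat Y) :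
    M.IsFlat (cyc M Y) := by
  refine flat_of_closure_subset ((cyc_subset M Y).trans hY.subset_ground) ?_
  intro x hx
  have hxY : x ∈ Y := by
    have := (M.closure_subset_closure (cyc_subset M Y)).trans hY.closure.subset
    exact this hx
  by_contra hxc
  obtain ⟨C, hC, hCs, hxC⟩ := exists_circuit_of_mem_closure
    ((cyc_subset M Y).trans hY.subset_ground) hx (fun h => hxc h)
  have hCY : C ⊆ Y := hCs.trans (Set.insert_subset hxY ((cyc_subset M Y).trans Set.Subset.rfl))
  exact hxc ⟨hxY, C, hC, hCY, hxC⟩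

lemma cyc_eq_self_of_cyclic {M : Matroid α} {Y : Set α} (hY : Cyclic M Y) : cyc M Y = Y :=
  Set.Subset.antisymm (cyc_subset M Y) (cyclic_subset_cyc hY Set.Subset.rfl)

/-- nullity is unchanged when passing to the cyclic core. -/
lemma nullity_cyc_aux {M : Matroid α} :
    ∀ n (Y : Set α), (Y \ cyc M Y).ncard ≤ n → Y ⊆ M.E →
      nullity M Y = nullity M (cyc M Y) := by
  intro n
  induction n with
  | zero =>
    intro Y hcard _
    have h0 : Y \ cyc M Y = ∅ := by
      rw [← Set.ncard_eq_zero (Set.toFinite _)]; omega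
    have : Y = cyc M Y :=
      Set.Subset.antisymm (fun x hx => by
        by_contra hc; exact (Set.eq_empty_iff_forall_notMem.mp h0 x) ⟨hx, hc⟩)
        (cyc_subset M Y)
    rw [← this]
  | succ n ih =>
    intro Y hcard hYE
    by_cases h0 : Y \ cyc M Y = ∅
    · have : Y = cyc M Y :=
        Set.Subset.antisymm (fun x hx => by
          by_contra hc; exact (Set.eq_empty_iff_forall_notMem.mp h0 x) ⟨hx, hc⟩)
          (cyc_subset M Y)
      rw [← this]
    · obtain ⟨x, hx⟩ := Set.nonempty_iff_ne_empty.mpr h0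
      obtain ⟨hxY, hxc⟩ := hx
      -- x is not in the closure of Y \ {x}
      have hxcl : x ∉ M.closure (Y \ {x}) := by
        intro hmem
        obtain ⟨C, hC, hCs, hxC⟩ := exists_circuit_of_mem_closure
          (diff_subset.trans hYE) hmem (fun h => h.2 rfl)
        have hCY : C ⊆ Y := hCs.trans (Set.insert_subset hxY diff_subset)
        exact hxc ⟨hxY, C, hC, hCY, hxC⟩
      -- cyc of Y \ {x} equals cyc of Y
      have hcyceq : cyc M (Y \ {x}) = cyc M Y := by
        apply Set.Subset.antisymm
        · rintro y ⟨hyY, C, hC, hCs, hyC⟩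
          exact ⟨hyY.1, C, hC, hCs.trans diff_subset, hyC⟩
        · rintro y ⟨hyY, C, hC, hCs, hyC⟩
          have hxC : x ∉ C := fun hxc' => hxc ⟨hxY, C, hC, hCs, hxc'⟩
          refine ⟨⟨hyY, fun h => hxC (h ▸ hyC)⟩, C, hC, fun z hz => ⟨hCs hz, fun h => hxC (h ▸ hz)⟩, hyC⟩
      have hrk : rk M Y = rk M (Y \ {x}) + 1 := by
        have := rk_insert_of_not_mem_closure (diff_subset.trans hYE) (hYE hxY) hxcl
        rw [Set.insert_diff_singleton, Set.insert_eq_of_mem hxY] at this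
        exact this
      have hncard : Y.ncard = (Y \ {x}).ncard + 1 := by
        rw [Set.ncard_diff_singleton_add_one hxY (Set.toFinite Y)]
      have hcard' : ((Y \ {x}) \ cyc M (Y \ {x})).ncard ≤ n := by
        rw [hcyceq]
        have hsub : (Y \ {x}) \ cyc M Y ⊆ (Y \ cyc M Y) \ {x} := by
          rintro y ⟨⟨h1, h2⟩, h3⟩; exact ⟨⟨h1, h3⟩, h2⟩
        have h1 : ((Y \ {x}) \ cyc M Y).ncard ≤ ((Y \ cyc M Y) \ {x}).ncard :=
          Set.ncard_le_ncard hsub (Set.toFinite _)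
        have h2 : ((Y \ cyc M Y) \ {x}).ncard + 1 = (Y \ cyc M Y).ncard := by
          exact Set.ncard_diff_singleton_add_one (show x ∈ Y \ cyc M Y from ⟨hxY, hxc⟩) (Set.toFinite _)
        omega
      have := ih (Y \ {x}) hcard' (diff_subset.trans hYE)
      rw [hcyceq] at this
      rw [nullity, nullity] at this ⊢
      rw [hrk, hncard]
      push_cast
      push_cast at this
      linarith

lemma nullity_cyc {M : Matroid α} {Y : Set α} (hY : Y ⊆ M.E) :
    nullity M Y = nullity M (cyc M Y) :=
  nullity_cyc_aux _ Y le_rfl hY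


lemma gamma_eq (M : Matroid α) (X : Finset α) :
    gamma M X = nullity M ↑X -
      ∑ Z ∈ Finset.univ.filter (fun Z : Finset α => CyclicFlat M ↑Z ∧ Z ⊂ X), gamma M Z := by
  rw [gamma]
  congr 1
  exact Finset.sum_attach _ _

lemma sum_gamma_subset_eq (M : Matroid α) {X : Finset α} (hX : CyclicFlat M ↑X) :
    ∑ Z ∈ Finset.univ.filter (fun Z : Finset α => CyclicFlat M ↑Z ∧ Z ⊆ X), gamma M Z
      = nullity M ↑X := by
  have hsplit : Finset.univ.filter (fun Z : Finset α => CyclicFlat M ↑Z ∧ Z ⊆ X)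
      = insert X (Finset.univ.filter (fun Z : Finset α => CyclicFlat M ↑Z ∧ Z ⊂ X)) := by
    ext Z
    simp only [Finset.mem_filter, Finset.mem_insert, Finset.mem_univ, true_and]
    constructor
    · rintro ⟨hCF, hsub⟩
      rcases eq_or_ne Z X with rfl | hne
      · exact Or.inl rfl
      · exact Or.inr ⟨hCF, lt_of_le_of_ne hsub hne⟩
    · rintro (rfl | ⟨hCF, hss⟩)
      · exact ⟨hX, le_rfl⟩
      · exact ⟨hCF, hss.subset⟩
  rw [hsplit, Finset.sum_insert (by
    simp only [Finset.mem_filter, Finset.mem_univ, true_and, not_and]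
    intro _ h
    exact absurd rfl h.ne), gamma_eq]
  ring

lemma gamma_eq_zero_of_flat_not_cyclic (M : Matroid α) {Y : Finset α}
    (hflat : M.IsFlat ↑Y) (hnc : ¬ Cyclic M ↑Y) : gamma M Y = 0 := by
  set Yc : Finset α := Y.filter (fun x => x ∈ cyc M ↑Y) with hYc_def
  have hYcY : Yc ⊆ Y := Finset.filter_subset _ _
  have hcoe : (↑Yc : Set α) = cyc M ↑Y := by
    ext x
    simp only [hYc_def, Finset.coe_filter, Set.mem_setOf_eq, Finset.mem_coe]
    constructor
    · rintro ⟨_, h⟩; exact h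
    · intro h; exact ⟨cyc_subset M ↑Y h, h⟩
  have hYE : (↑Y : Set α) ⊆ M.E := hflat.subset_ground
  have hCFYc : CyclicFlat M ↑Yc := by
    rw [hcoe]; exact ⟨cyc_cyclic hYE, cyc_flat hflat⟩
  have hfilter : Finset.univ.filter (fun Z : Finset α => CyclicFlat M ↑Z ∧ Z ⊂ Y)
      = Finset.univ.filter (fun Z : Finset α => CyclicFlat M ↑Z ∧ Z ⊆ Yc) := by
    ext Z
    simp only [Finset.mem_filter, Finset.mem_univ, true_and, and_congr_right_iff]
    intro hCF
    constructor
    · intro hss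
      rw [← Finset.coe_subset, hcoe]
      exact cyclic_subset_cyc hCF.1 (by exact_mod_cast hss.subset)
    · intro hsub
      refine lt_of_le_of_ne (hsub.trans hYcY) ?_
      rintro rfl
      apply hnc
      have : (↑Z : Set α) ⊆ cyc M ↑Z := by rw [← hcoe]; exact_mod_cast hsub
      have hcyceq : cyc M ↑Z = ↑Z := Set.Subset.antisymm (cyc_subset _ _) this
      exact hcyceq ▸ cyc_cyclic hYE
  rw [gamma_eq, hfilter, sum_gamma_subset_eq M hCFYc]
  rw [show nullity M ↑Yc = nullity M ↑Y by rw [hcoe, ← nullity_cyc hYE]]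
  ring


lemma cyclicFlat_deleteElem_iff {M : Matroid α} {e : α} {F : Set α} (hF : M.IsFlat F)
    (heF : e ∉ F) {Z : Set α} (hZF : Z ⊆ F) :
    CyclicFlat (deleteElem M e) Z ↔ CyclicFlat M Z := by
  have hZE : Z ⊆ M.E := hZF.trans hF.subset_ground
  have hZE' : Z ⊆ M.E \ {e} := fun x hx => ⟨hZE hx, fun h => heF (h ▸ hZF hx)⟩
  have hcyc : Cyclic (deleteElem M e) Z ↔ Cyclic M Z := by
    constructor
    · rintro ⟨_, h⟩
      refine ⟨hZE, fun x hx => ?_⟩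
      obtain ⟨C, hC, hCZ, hxC⟩ := h x hx
      have heC : e ∉ C := fun hec => (hC.subset_ground hec).2 rfl
      exact ⟨C, (deleteElem_circuit_iff heC).mp hC, hCZ, hxC⟩
    · rintro ⟨_, h⟩
      refine ⟨hZE', fun x hx => ?_⟩
      obtain ⟨C, hC, hCZ, hxC⟩ := h x hx
      have heC : e ∉ C := fun hec => heF (hZF (hCZ hec))
      exact ⟨C, (deleteElem_circuit_iff heC).mpr hC, hCZ, hxC⟩
  have hflat : (deleteElem M e).IsFlat Z ↔ M.IsFlat Z := by
    constructor
    · intro h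
      refine flat_of_closure_subset hZE ?_
      have h1 : (deleteElem M e).closure Z = Z := h.closure
      rw [deleteElem_closure hZE'] at h1
      have h2 : M.closure Z ⊆ F := by
        have := M.closure_subset_closure hZF
        rwa [hF.closure] at this
      intro x hx
      have hxe : x ≠ e := fun hxeq => heF (hxeq ▸ h2 hx)
      rw [← h1]; exact ⟨hx, hxe⟩
    · intro h
      refine flat_of_closure_subset hZE' ?_
      rw [deleteElem_closure hZE', h.closure]
      exact diff_subset
  rw [CyclicFlat, CyclicFlat, hcyc, hflat]

lemma gamma_deleteElem_eq_aux {M : Matroid α} {e : α} {F : Set α} (hF : M.IsFlat F)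
    (heF : e ∉ F) :
    ∀ n (Y : Finset α), Y.card ≤ n → ↑Y ⊆ F → gamma (deleteElem M e) Y = gamma M Y := by
  intro n
  induction n with
  | zero =>
    intro Y hcard hYF
    have : Y = ∅ := Finset.card_eq_zero.mp (le_antisymm hcard (Nat.zero_le _))
    subst this
    rw [gamma_eq, gamma_eq]
    have h1 : ∀ N : Matroid α, Finset.univ.filter
        (fun Z : Finset α => CyclicFlat N ↑Z ∧ Z ⊂ (∅ : Finset α)) = ∅ := by
      intro N
      apply Finset.filter_false_of_mem
      intro Z _
      rintro ⟨_, hss⟩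
      exact absurd hss (by simp)
    rw [h1, h1]
    simp only [Finset.sum_empty, Finset.coe_empty]
    have : rk (deleteElem M e) (∅ : Set α) = rk M (∅ : Set α) :=
      rk_deleteElem_eq (by simp)
    rw [nullity, nullity, this]
  | succ n ih =>
    intro Y hcard hYF
    have hYE' : (↑Y : Set α) ⊆ M.E \ {e} :=
      fun x hx => ⟨hF.subset_ground (hYF hx), fun h => heF (h ▸ hYF hx)⟩
    rw [gamma_eq, gamma_eq]
    have hnull : nullity (deleteElem M e) ↑Y = nullity M ↑Y := by
      rw [nullity, nullity, rk_deleteElem_eq hYE']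
    rw [hnull]
    congr 1
    have hfilter : Finset.univ.filter
        (fun Z : Finset α => CyclicFlat (deleteElem M e) ↑Z ∧ Z ⊂ Y)
        = Finset.univ.filter (fun Z : Finset α => CyclicFlat M ↑Z ∧ Z ⊂ Y) := by
      ext Z
      simp only [Finset.mem_filter, Finset.mem_univ, true_and, and_congr_left_iff]
      intro hss
      exact cyclicFlat_deleteElem_iff hF heF
        ((Finset.coe_subset.mpr hss.subset).trans hYF)
    rw [hfilter]
    apply Finset.sum_congr rfl
    intro Z hZ
    simp only [Finset.mem_filter] at hZ
    have hZss := hZ.2.2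
    exact ih Z (by have := Finset.card_lt_card hZss; omega)
      ((Finset.coe_subset.mpr hZss.subset).trans hYF)

lemma gamma_deleteElem_eq {M : Matroid α} {e : α} {F : Set α} (hF : M.IsFlat F)
    (heF : e ∉ F) {Y : Finset α} (hYF : ↑Y ⊆ F) :
    gamma (deleteElem M e) Y = gamma M Y :=
  gamma_deleteElem_eq_aux hF heF Y.card Y le_rfl hYF

lemma dgamma_eq_zero_of_not_mem {M : Matroid α} {e : α} {Z : Finset α}
    (hZ : CyclicFlat M ↑Z) (heZ : e ∉ Z) : dgamma M e Z = 0 := by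
  rw [dgamma, Finset.erase_eq_of_notMem heZ,
    gamma_deleteElem_eq hZ.2 (by exact_mod_cast heZ) (Set.Subset.rfl)]
  ring


section F2
variable {M : Matroid α} {e : α}

/-- If `insert e Y` is a cyclic flat of `M` and `e ∉ Y`, then `Y` is a flat of `M \ e`. -/
lemma flat_deleteElem_of_insert {Y : Finset α} (heY : e ∉ Y)
    (hCF : CyclicFlat M ↑(insert e Y)) : (deleteElem M e).IsFlat ↑Y := by
  have hYE : (↑Y : Set α) ⊆ M.E := by
    intro x hx
    exact hCF.2.subset_ground (by rw [Finset.coe_insert]; exact Set.mem_insert_of_mem _ hx)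
  have hYE' : (↑Y : Set α) ⊆ M.E \ {e} :=
    fun x hx => ⟨hYE hx, fun h => heY (by exact_mod_cast h ▸ hx)⟩
  refine flat_of_closure_subset hYE' ?_
  rw [deleteElem_closure hYE']
  have h1 : M.closure ↑Y ⊆ insert e ↑Y := by
    have := M.closure_subset_closure (show (↑Y : Set α) ⊆ ↑(insert e Y) by
      rw [Finset.coe_insert]; exact Set.subset_insert _ _)
    rwa [hCF.2.closure, Finset.coe_insert] at this
  intro x hx
  rcases h1 hx.1 with h | h
  · exact absurd h hx.2
  · exact h

/-- If `Z` is a cyclic flat of `M \ e` with `e ∈ cl_M(Z)`, then `insert e Z` is a cyclic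
flat of `M`. -/
lemma cyclicFlat_insert_of_deleteElem {Z : Finset α}
    (hCF : CyclicFlat (deleteElem M e) ↑Z) (hecl : e ∈ M.closure ↑Z) :
    CyclicFlat M ↑(insert e Z) := by
  have hZE' : (↑Z : Set α) ⊆ M.E \ {e} := hCF.1.1
  have hZE : (↑Z : Set α) ⊆ M.E := hZE'.trans diff_subset
  have heZ : e ∉ (↑Z : Set α) := fun h => (hZE' h).2 rfl
  have hclZ : M.closure ↑Z = insert e ↑Z := by
    have h1 : (deleteElem M e).closure ↑Z = ↑Z := hCF.2.closure
    rw [deleteElem_closure hZE'] at h1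
    apply Set.Subset.antisymm
    · intro x hx
      by_cases hxe : x = e
      · exact hxe ▸ Set.mem_insert _ _
      · exact Set.mem_insert_of_mem _ (h1 ▸ ⟨hx, hxe⟩)
    · exact Set.insert_subset hecl (M.subset_closure _ hZE)
  rw [Finset.coe_insert, ← hclZ]
  refine ⟨⟨M.closure_subset_ground _, fun x hx => ?_⟩, flat_closure M _⟩
  rw [hclZ] at hx
  rcases hx with rfl | hxZ
  · obtain ⟨C, hC, hCs, hxC⟩ := exists_circuit_of_mem_closure hZE hecl heZ
    exact ⟨C, hC, hCs.trans (by rw [hclZ]), hxC⟩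
  · obtain ⟨C, hC, hCs, hxC⟩ := hCF.1.2 x hxZ
    have heC : e ∉ C := fun h => heZ (hCs h)
    exact ⟨C, (deleteElem_circuit_iff heC).mp hC,
      hCs.trans ((M.subset_closure _ hZE)), hxC⟩

/-- If `insert e Y` is a cyclic flat of `M`, `e ∉ Y` and `Y` is cyclic in `M \ e`,
then `e ∈ cl_M(Y)`. -/
lemma mem_closure_of_insert_cyclicFlat {Y : Finset α} (heY : e ∉ Y)
    (hCF : CyclicFlat M ↑(insert e Y)) : e ∈ M.closure ↑Y := by
  obtain ⟨C, hC, hCs, heC⟩ := hCF.1.2 e (by rw [Finset.coe_insert]; exact Set.mem_insert _ _)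
  have h1 : e ∈ M.closure (C \ {e}) := hC.mem_closure_diff heC
  refine M.closure_subset_closure ?_ h1
  intro x hx
  have := hCs hx.1
  rw [Finset.coe_insert] at this
  rcases this with h | h
  · exact absurd h hx.2
  · exact h

lemma sum_dgamma_eq_neg_one {X : Finset α}
    (hX : CyclicFlat M ↑X) (heX : e ∈ X) :
    ∑ Z ∈ Finset.univ.filter (fun Z : Finset α => CyclicFlat M ↑Z ∧ Z ⊆ X),
      dgamma M e Z = -1 := by
  set Md := deleteElem M e with hMd
  have hXE : (↑X : Set α) ⊆ M.E := hX.2.subset_ground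
  have hXe_coe : (↑(X.erase e) : Set α) = ↑X \ {e} := by
    rw [Finset.coe_erase]
  have hXe_sub : (↑(X.erase e) : Set α) ⊆ M.E \ {e} := by
    rw [hXe_coe]
    exact fun x hx => ⟨hXE hx.1, hx.2⟩
  -- e is in the closure of X minus e
  have hecl : e ∈ M.closure (↑X \ {e}) := by
    obtain ⟨C, hC, hCs, heC⟩ := hX.1.2 e (by exact_mod_cast heX)
    refine M.closure_subset_closure (show C \ {e} ⊆ ↑X \ {e} from
      fun x hx => ⟨hCs hx.1, hx.2⟩) (hC.mem_closure_diff heC)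
  -- (C) nullity relation
  have hnull : nullity M ↑X = nullity Md ↑(X.erase e) + 1 := by
    have h1 : rk M ↑X = rk M (↑X \ {e}) := rk_eq_rk_diff_of_mem_closure hXE hecl
    have h2 : rk Md ↑(X.erase e) = rk M ↑(X.erase e) := rk_deleteElem_eq hXe_sub
    rw [nullity, nullity, h2, hXe_coe, ← h1]
    have h3 : (↑X : Set α).ncard = (↑X \ {e} : Set α).ncard + 1 :=
      (Set.ncard_diff_singleton_add_one (by exact_mod_cast heX) (Set.toFinite _)).symm
    rw [h3]
    push_cast
    ring
  -- Flatness of X.erase e in Md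
  have hflatXe : Md.IsFlat ↑(X.erase e) := by
    refine flat_of_closure_subset hXe_sub ?_
    rw [hMd, deleteElem_closure hXe_sub, hXe_coe]
    have : M.closure (↑X \ {e}) ⊆ ↑X := by
      have := M.closure_subset_closure (show (↑X \ {e} : Set α) ⊆ ↑X from diff_subset)
      rwa [hX.2.closure] at this
    exact fun x hx => ⟨this hx.1, hx.2⟩
  -- (B0) : nullity Md (X.erase e) = sum over cyclic flats of Md inside X.erase e
  have hB0 : ∑ Z ∈ Finset.univ.filter
      (fun Z : Finset α => CyclicFlat Md ↑Z ∧ Z ⊆ X.erase e), gamma Md Z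
      = nullity Md ↑(X.erase e) := by
    by_cases hc : CyclicFlat Md ↑(X.erase e)
    · exact sum_gamma_subset_eq Md hc
    · have hzero : gamma Md (X.erase e) = 0 :=
        gamma_eq_zero_of_flat_not_cyclic Md hflatXe (fun hcyc => hc ⟨hcyc, hflatXe⟩)
      have hfeq : Finset.univ.filter
          (fun Z : Finset α => CyclicFlat Md ↑Z ∧ Z ⊆ X.erase e)
          = Finset.univ.filter
          (fun Z : Finset α => CyclicFlat Md ↑Z ∧ Z ⊂ X.erase e) := by
        ext Z
        simp only [Finset.mem_filter, Finset.mem_univ, true_and, and_congr_right_iff]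
        intro hZ
        constructor
        · intro hsub
          refine lt_of_le_of_ne hsub ?_
          rintro rfl
          exact hc hZ
        · exact fun h => h.subset
      rw [hfeq]
      have := gamma_eq Md (X.erase e)
      rw [hzero] at this
      linarith
  -- names for the two index sets
  set s := Finset.univ.filter (fun Z : Finset α => CyclicFlat M ↑Z ∧ Z ⊆ X) with hs_def
  set sd := Finset.univ.filter
      (fun Z : Finset α => CyclicFlat Md ↑Z ∧ Z ⊆ X.erase e) with hsd_def
  -- (A)
  have hA : ∑ Z ∈ s, gamma M Z = nullity M ↑X := sum_gamma_subset_eq M hX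
  -- Claim 1 : non-e part matches
  have hclaim1 : s.filter (fun Z : Finset α => e ∉ Z)
      = sd.filter (fun Z : Finset α => e ∉ M.closure ↑Z) := by
    ext Z
    simp only [hs_def, hsd_def, Finset.mem_filter, Finset.mem_univ, true_and]
    constructor
    · rintro ⟨⟨hCF, hZX⟩, heZ⟩
      have heZ' : e ∉ (↑Z : Set α) := by exact_mod_cast heZ
      have hecl' : e ∉ M.closure ↑Z := by rw [hCF.2.closure]; exact heZ'
      exact ⟨⟨(cyclicFlat_deleteElem_iff hCF.2 heZ' Set.Subset.rfl).mpr hCF,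
        Finset.subset_erase.mpr ⟨hZX, heZ⟩⟩, hecl'⟩
    · rintro ⟨⟨hCF, hZXe⟩, hecl'⟩
      have hZE : (↑Z : Set α) ⊆ M.E := hCF.1.1.trans diff_subset
      have hCFM : CyclicFlat M ↑Z :=
        (cyclicFlat_deleteElem_iff (flat_closure M ↑Z) hecl'
          (M.subset_closure _ hZE)).mp hCF
      exact ⟨⟨hCFM, (Finset.subset_erase.mp hZXe).1⟩, (Finset.subset_erase.mp hZXe).2⟩
  -- the set 𝒴
  set Ys := Finset.univ.filter
      (fun Y : Finset α => Y ⊆ X.erase e ∧ CyclicFlat M ↑(insert e Y)) with hYs_def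
  -- Step 1 : bijection between e-part of s and Ys
  have hstep1 : ∑ Z ∈ s.filter (fun Z : Finset α => e ∈ Z), gamma Md (Z.erase e)
      = ∑ Y ∈ Ys, gamma Md Y := by
    refine Finset.sum_nbij' (fun Z => Z.erase e) (fun Y => insert e Y) ?_ ?_ ?_ ?_ ?_
    · intro Z hZ
      simp only [hs_def, Finset.mem_filter, Finset.mem_univ, true_and] at hZ
      obtain ⟨⟨hCF, hZX⟩, heZ⟩ := hZ
      simp only [hYs_def, Finset.mem_filter, Finset.mem_univ, true_and]
      refine ⟨Finset.erase_subset_erase e hZX, ?_⟩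
      rw [Finset.insert_erase heZ]
      exact hCF
    · intro Y hY
      simp only [hYs_def, Finset.mem_filter, Finset.mem_univ, true_and] at hY
      obtain ⟨hYX, hCF⟩ := hY
      simp only [hs_def, Finset.mem_filter, Finset.mem_univ, true_and]
      exact ⟨⟨hCF, Finset.insert_subset heX ((hYX.trans (Finset.erase_subset _ _)))⟩,
        Finset.mem_insert_self _ _⟩
    · intro Z hZ
      simp only [hs_def, Finset.mem_filter] at hZ
      exact Finset.insert_erase hZ.2
    · intro Y hY
      simp only [hYs_def, Finset.mem_filter, Finset.mem_univ, true_and] at hY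
      exact Finset.erase_insert (fun h => (Finset.mem_erase.mp (hY.1 h)).1 rfl)
    · intro Z _; rfl
  -- Step 3 : cyclic members of Ys are exactly the e-closure part of sd
  have hstep3 : Ys.filter (fun Y : Finset α => Cyclic Md ↑Y)
      = sd.filter (fun Z : Finset α => e ∈ M.closure ↑Z) := by
    ext Y
    simp only [hYs_def, hsd_def, Finset.mem_filter, Finset.mem_univ, true_and]
    constructor
    · rintro ⟨⟨hYX, hCF⟩, hcyc⟩
      have heY : e ∉ Y := fun h => (Finset.mem_erase.mp (hYX h)).1 rfl
      have hflat : Md.IsFlat ↑Y := flat_deleteElem_of_insert heY hCF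
      exact ⟨⟨⟨hcyc, hflat⟩, hYX⟩, mem_closure_of_insert_cyclicFlat heY hCF⟩
    · rintro ⟨⟨hCF, hYX⟩, hecl'⟩
      exact ⟨⟨hYX, cyclicFlat_insert_of_deleteElem hCF hecl'⟩, hCF.1⟩
  -- Step 2 : non-cyclic members of Ys contribute zero
  have hstep2 : ∑ Y ∈ Ys.filter (fun Y : Finset α => ¬ Cyclic Md ↑Y), gamma Md Y = 0 := by
    apply Finset.sum_eq_zero
    intro Y hY
    simp only [hYs_def, Finset.mem_filter, Finset.mem_univ, true_and] at hY
    obtain ⟨⟨hYX, hCF⟩, hnc⟩ := hY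
    have heY : e ∉ Y := fun h => (Finset.mem_erase.mp (hYX h)).1 rfl
    exact gamma_eq_zero_of_flat_not_cyclic Md (flat_deleteElem_of_insert heY hCF) hnc
  -- (B1) total
  have hB1 : ∑ Z ∈ s, gamma Md (Z.erase e) = nullity Md ↑(X.erase e) := by
    rw [← Finset.sum_filter_add_sum_filter_not s (fun Z : Finset α => e ∈ Z)
      (fun Z => gamma Md (Z.erase e))]
    have hne : ∑ Z ∈ s.filter (fun Z : Finset α => e ∉ Z), gamma Md (Z.erase e)
        = ∑ Z ∈ sd.filter (fun Z : Finset α => e ∉ M.closure ↑Z), gamma Md Z := by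
      rw [← hclaim1]
      apply Finset.sum_congr rfl
      intro Z hZ
      simp only [Finset.mem_filter] at hZ
      rw [Finset.erase_eq_of_notMem hZ.2]
    rw [hstep1, ← Finset.sum_filter_add_sum_filter_not Ys (fun Y : Finset α => Cyclic Md ↑Y)
      (fun Y => gamma Md Y), hstep2, hstep3, hne, add_zero, ← hB0,
      ← Finset.sum_filter_add_sum_filter_not sd (fun Z : Finset α => e ∈ M.closure ↑Z)
      (fun Z => gamma Md Z)]
  -- final computation
  have hsum : ∑ Z ∈ s, dgamma M e Z
      = (∑ Z ∈ s, gamma Md (Z.erase e)) - ∑ Z ∈ s, gamma M Z := by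
    rw [← Finset.sum_sub_distrib]
    rfl
  rw [hsum, hB1, hA, hnull]
  ring

end F2


section Weisner
variable {M : Matroid α} {e : α}

/-- `Δγ` sums to `-1` over cyclic flats containing `e` inside a cyclic flat containing `e`. -/
lemma sum_dgamma_mem_eq_neg_one {z : Finset α} (hz : CyclicFlat M ↑z) (hez : e ∈ z) :
    ∑ x ∈ Finset.univ.filter (fun x : Finset α => CyclicFlat M ↑x ∧ x ⊆ z ∧ e ∈ x),
      dgamma M e x = -1 := by
  have h := sum_dgamma_eq_neg_one hz hez
  rw [← h, ← Finset.sum_filter_add_sum_filter_not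
    (Finset.univ.filter (fun x : Finset α => CyclicFlat M ↑x ∧ x ⊆ z))
    (fun x : Finset α => e ∈ x) (fun x => dgamma M e x)]
  have h2 : ∑ x ∈ (Finset.univ.filter
      (fun x : Finset α => CyclicFlat M ↑x ∧ x ⊆ z)).filter
      (fun x : Finset α => e ∉ x), dgamma M e x = 0 := by
    apply Finset.sum_eq_zero
    intro x hx
    simp only [Finset.mem_filter, Finset.mem_univ, true_and] at hx
    exact dgamma_eq_zero_of_not_mem hx.1.1 hx.2
  have h3 : Finset.univ.filter (fun x : Finset α => CyclicFlat M ↑x ∧ x ⊆ z ∧ e ∈ x)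
      = (Finset.univ.filter
        (fun x : Finset α => CyclicFlat M ↑x ∧ x ⊆ z)).filter
        (fun x : Finset α => e ∈ x) := by
    rw [Finset.filter_filter]
    apply Finset.filter_congr
    intro x _
    tauto
  rw [h3, h2, add_zero]

/-- The join of two cyclic-flat finsets. -/
noncomputable def jn (M : Matroid α) (a x : Finset α) : Finset α :=
  (Set.toFinite (M.closure (↑x ∪ ↑a))).toFinset

lemma coe_jn (M : Matroid α) (a x : Finset α) :
    ↑(jn M a x) = M.closure (↑x ∪ ↑a) := Set.Finite.coe_toFinset _

lemma cyclicFlat_jn {a x : Finset α} (ha : CyclicFlat M ↑a) (hx : CyclicFlat M ↑x) :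
    CyclicFlat M ↑(jn M a x) := by
  rw [coe_jn]; exact hx.join ha

lemma subset_jn {a x : Finset α} (ha : CyclicFlat M ↑a) (hx : CyclicFlat M ↑x) :
    x ⊆ jn M a x := by
  rw [← Finset.coe_subset, coe_jn]
  exact (Set.subset_union_left).trans
    (M.subset_closure _ (Set.union_subset hx.1.1 ha.1.1))

lemma subset_jn' {a x : Finset α} (ha : CyclicFlat M ↑a) (hx : CyclicFlat M ↑x) :
    a ⊆ jn M a x := by
  rw [← Finset.coe_subset, coe_jn]
  exact (Set.subset_union_right).trans
    (M.subset_closure _ (Set.union_subset hx.1.1 ha.1.1))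

lemma jn_subset {a x w : Finset α} (hw : CyclicFlat M ↑w) (hxw : x ⊆ w) (haw : a ⊆ w) :
    jn M a x ⊆ w := by
  rw [← Finset.coe_subset, coe_jn]
  have h1 : (↑x ∪ ↑a : Set α) ⊆ ↑w :=
    Set.union_subset (Finset.coe_subset.mpr hxw) (Finset.coe_subset.mpr haw)
  have := M.closure_subset_closure h1
  rwa [hw.2.closure] at this

lemma weisner_aux {W a : Finset α}
    (ha : CyclicFlat M ↑a) (hea : e ∈ a) (haW : a ⊆ W) :
    ∀ n (w : Finset α), w.card ≤ n → CyclicFlat M ↑w → w ⊆ W → e ∈ w → a ⊆ w →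
      (∑ x ∈ (Finset.univ.filter
          (fun x : Finset α => CyclicFlat M ↑x ∧ x ⊆ W ∧ e ∈ x)).filter
          (fun x => jn M a x = w), dgamma M e x) = if w = a then -1 else 0 := by
  set Q := Finset.univ.filter
    (fun x : Finset α => CyclicFlat M ↑x ∧ x ⊆ W ∧ e ∈ x) with hQ_def
  intro n
  induction n with
  | zero =>
    intro w hcard hwCF hwW hew haw
    have : e ∈ w := hew
    have : w.card ≠ 0 := by
      intro h
      rw [Finset.card_eq_zero] at h
      subst h
      exact (Finset.notMem_empty e) hew
    omega
  | succ n ih =>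
    intro w hcard hwCF hwW hew haw
    -- the fiberwise identity
    have hT : ∑ y ∈ Q.filter (fun y => a ⊆ y ∧ y ⊆ w),
        (∑ x ∈ Q.filter (fun x => jn M a x = y), dgamma M e x) = -1 := by
      have hmaps : ∀ x ∈ Q.filter (fun x => x ⊆ w),
          jn M a x ∈ Q.filter (fun y => a ⊆ y ∧ y ⊆ w) := by
        intro x hx
        simp only [hQ_def, Finset.mem_filter, Finset.mem_univ, true_and] at hx ⊢
        obtain ⟨⟨hxCF, hxW, hex⟩, hxw⟩ := hx
        have hjCF : CyclicFlat M ↑(jn M a x) := cyclicFlat_jn ha hxCF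
        have hjw : jn M a x ⊆ w := jn_subset hwCF hxw haw
        exact ⟨⟨hjCF, hjw.trans hwW, (subset_jn ha hxCF) hex⟩, subset_jn' ha hxCF, hjw⟩
      have hfib := Finset.sum_fiberwise_of_maps_to hmaps (fun x => dgamma M e x)
      -- fibers over Q.filter(⊆w) equal fibers over Q
      have hfibeq : ∀ y ∈ Q.filter (fun y => a ⊆ y ∧ y ⊆ w),
          ∑ x ∈ (Q.filter (fun x => x ⊆ w)).filter (fun x => jn M a x = y),
            dgamma M e x
          = ∑ x ∈ Q.filter (fun x => jn M a x = y), dgamma M e x := by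
        intro y hy
        simp only [Finset.mem_filter] at hy
        congr 1
        rw [Finset.filter_filter]
        apply Finset.filter_congr
        intro x hx
        simp only [hQ_def, Finset.mem_filter, Finset.mem_univ, true_and] at hx
        constructor
        · rintro ⟨_, h⟩; exact h
        · intro h
          refine ⟨?_, h⟩
          exact (subset_jn ha hx.1).trans (h ▸ hy.2.2)
      rw [← Finset.sum_congr rfl hfibeq, hfib]
      -- now the total is the I1 sum at w
      have hQw : Q.filter (fun x => x ⊆ w) = Finset.univ.filter
          (fun x : Finset α => CyclicFlat M ↑x ∧ x ⊆ w ∧ e ∈ x) := by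
        ext x
        simp only [hQ_def, Finset.mem_filter, Finset.mem_univ, true_and]
        constructor
        · rintro ⟨⟨h1, _, h3⟩, h4⟩; exact ⟨h1, h4, h3⟩
        · rintro ⟨h1, h2, h3⟩; exact ⟨⟨h1, h2.trans hwW, h3⟩, h2⟩
      rw [hQw]
      exact sum_dgamma_mem_eq_neg_one hwCF hew
    -- split off the w term
    have hwmem : w ∈ Q.filter (fun y => a ⊆ y ∧ y ⊆ w) := by
      simp only [hQ_def, Finset.mem_filter, Finset.mem_univ, true_and]
      exact ⟨⟨hwCF, hwW, hew⟩, haw, le_rfl⟩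
    rw [← Finset.add_sum_erase _ _ hwmem] at hT
    -- apply induction hypothesis to smaller fibers
    have hIH : ∀ y ∈ (Q.filter (fun y => a ⊆ y ∧ y ⊆ w)).erase w,
        (∑ x ∈ Q.filter (fun x => jn M a x = y), dgamma M e x)
          = if y = a then -1 else 0 := by
      intro y hy
      obtain ⟨hyne, hy'⟩ := Finset.mem_erase.mp hy
      simp only [hQ_def, Finset.mem_filter, Finset.mem_univ, true_and] at hy'
      obtain ⟨⟨hyCF, hyW, hey⟩, hay, hyw⟩ := hy'
      have : y.card < w.card := Finset.card_lt_card (lt_of_le_of_ne hyw hyne)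
      exact ih y (by omega) hyCF hyW hey hay
    by_cases hwa : w = a
    · have hempty : ∀ y ∈ (Q.filter (fun y => a ⊆ y ∧ y ⊆ w)).erase w,
          (∑ x ∈ Q.filter (fun x => jn M a x = y), dgamma M e x) = 0 := by
        intro y hy
        obtain ⟨hyne, hy'⟩ := Finset.mem_erase.mp hy
        simp only [hQ_def, Finset.mem_filter, Finset.mem_univ, true_and] at hy'
        have hwy : w ⊆ y := by rw [hwa]; exact hy'.2.1
        exact absurd (Finset.Subset.antisymm hy'.2.2 hwy) hyne
      rw [Finset.sum_congr rfl hempty, Finset.sum_const_zero, add_zero] at hT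
      rw [if_pos hwa]
      exact hT
    · -- the erased sum contains exactly the a term
      have hamem : a ∈ (Q.filter (fun y => a ⊆ y ∧ y ⊆ w)).erase w := by
        rw [Finset.mem_erase]
        simp only [hQ_def, Finset.mem_filter, Finset.mem_univ, true_and]
        exact ⟨fun h => hwa h.symm, ⟨ha, haW, hea⟩, le_rfl, haw⟩
      have hsum_erase : ∑ y ∈ (Q.filter (fun y => a ⊆ y ∧ y ⊆ w)).erase w,
          (∑ x ∈ Q.filter (fun x => jn M a x = y), dgamma M e x) = -1 := by
        rw [Finset.sum_congr rfl hIH]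
        rw [Finset.sum_ite_eq' ((Q.filter (fun y => a ⊆ y ∧ y ⊆ w)).erase w) a
          (fun _ => (-1 : ℤ))]
        rw [if_pos hamem]
      rw [hsum_erase] at hT
      rw [if_neg hwa]
      linarith

end Weisner


section Final
variable {M : Matroid α} {e : α}

lemma exists_pos_of_sum_pos {s : Finset (Finset α)} {f : Finset α → ℤ}
    (h : 0 < ∑ x ∈ s, f x) : ∃ x ∈ s, 0 < f x := by
  by_contra hc
  push_neg at hc
  exact absurd (Finset.sum_nonpos hc) (by omega)

lemma exists_neg_of_sum_neg {s : Finset (Finset α)} {f : Finset α → ℤ}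
    (h : ∑ x ∈ s, f x < 0) : ∃ x ∈ s, f x < 0 := by
  by_contra hc
  push_neg at hc
  exact absurd (Finset.sum_nonneg hc) (by omega)

lemma jn_self {a w : Finset α} (hw : CyclicFlat M ↑w) (haw : a ⊆ w) :
    jn M a w = w := by
  rw [← Finset.coe_inj, coe_jn]
  rw [Set.union_eq_self_of_subset_right (Finset.coe_subset.mpr haw)]
  exact hw.2.closure

theorem statement_16' (M : Matroid α) (e : α) (he : e ∈ M.E) :
    (∀ X : Finset α, CyclicFlat M ↑X → dgamma M e X < 0 →
      (∃ ZX : Finset α, CyclicFlat M ↑ZX ∧ ZX ⊂ X ∧ 0 < dgamma M e ZX) →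
      ∃ Z0 Z1 : Finset α, CyclicFlat M ↑Z0 ∧ CyclicFlat M ↑Z1 ∧ Z0 ⊂ X ∧ Z1 ⊂ X ∧
        0 < dgamma M e Z0 ∧ 0 < dgamma M e Z1 ∧
        M.closure (↑Z0 ∪ ↑Z1) = (↑X : Set α)) ∧
    (∀ W : Finset α, CyclicFlat M ↑W → 0 < dgamma M e W →
      ∃ Z0 Z1 : Finset α, CyclicFlat M ↑Z0 ∧ CyclicFlat M ↑Z1 ∧ Z0 ⊂ W ∧ Z1 ⊂ W ∧
        dgamma M e Z0 < 0 ∧ dgamma M e Z1 < 0 ∧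
        M.closure (↑Z0 ∪ ↑Z1) = (↑W : Set α)) := by
  constructor
  · -- Part 1
    rintro X hX hneg ⟨ZX, hZX, hZXss, hZXpos⟩
    have heZX : e ∈ ZX := by
      by_contra h
      rw [dgamma_eq_zero_of_not_mem hZX h] at hZXpos
      exact lt_irrefl 0 hZXpos
    have heX : e ∈ X := hZXss.subset heZX
    have hW := weisner_aux (W := X) hZX heZX hZXss.subset X.card X le_rfl hX
      le_rfl heX hZXss.subset
    rw [if_neg (fun h => (ne_of_lt hZXss) h.symm)] at hW
    set Q := Finset.univ.filter
      (fun x : Finset α => CyclicFlat M ↑x ∧ x ⊆ X ∧ e ∈ x) with hQ_def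
    have hXmem : X ∈ Q.filter (fun x => jn M ZX x = X) := by
      simp only [hQ_def, Finset.mem_filter, Finset.mem_univ, true_and]
      exact ⟨⟨hX, le_rfl, heX⟩, jn_self hX hZXss.subset⟩
    rw [← Finset.add_sum_erase _ _ hXmem] at hW
    have hpos : 0 < ∑ x ∈ (Q.filter (fun x => jn M ZX x = X)).erase X,
        dgamma M e x := by linarith
    obtain ⟨x, hxmem, hxpos⟩ := exists_pos_of_sum_pos hpos
    obtain ⟨hxne, hx'⟩ := Finset.mem_erase.mp hxmem
    simp only [hQ_def, Finset.mem_filter, Finset.mem_univ, true_and] at hx'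
    obtain ⟨⟨hxCF, hxX, _⟩, hjn⟩ := hx'
    refine ⟨ZX, x, hZX, hxCF, hZXss, lt_of_le_of_ne hxX hxne, hZXpos, hxpos, ?_⟩
    have := coe_jn M ZX x
    rw [hjn] at this
    rw [Set.union_comm]
    exact this.symm
  · -- Part 2
    intro W hW hpos
    have heW : e ∈ W := by
      by_contra h
      rw [dgamma_eq_zero_of_not_mem hW h] at hpos
      exact lt_irrefl 0 hpos
    set Q := Finset.univ.filter
      (fun x : Finset α => CyclicFlat M ↑x ∧ x ⊆ W ∧ e ∈ x) with hQ_def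
    have hWQ : W ∈ Q := by
      simp only [hQ_def, Finset.mem_filter, Finset.mem_univ, true_and]
      exact ⟨hW, le_rfl, heW⟩
    have hI1 : ∑ x ∈ Q, dgamma M e x = -1 := sum_dgamma_mem_eq_neg_one hW heW
    rw [← Finset.add_sum_erase _ _ hWQ] at hI1
    have hneg : ∑ x ∈ Q.erase W, dgamma M e x < 0 := by linarith
    obtain ⟨a, hamem, haneg⟩ := exists_neg_of_sum_neg hneg
    obtain ⟨hane, ha'⟩ := Finset.mem_erase.mp hamem
    simp only [hQ_def, Finset.mem_filter, Finset.mem_univ, true_and] at ha'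
    obtain ⟨haCF, haW, hea⟩ := ha'
    have hWeis := weisner_aux (W := W) haCF hea haW W.card W le_rfl hW
      le_rfl heW haW
    rw [if_neg (fun h => hane h.symm)] at hWeis
    have hWmem : W ∈ Q.filter (fun x => jn M a x = W) := by
      simp only [hQ_def, Finset.mem_filter, Finset.mem_univ, true_and]
      exact ⟨⟨hW, le_rfl, heW⟩, jn_self hW haW⟩
    rw [← Finset.add_sum_erase _ _ hWmem] at hWeis
    have hneg2 : ∑ x ∈ (Q.filter (fun x => jn M a x = W)).erase W,
        dgamma M e x < 0 := by linarith
    obtain ⟨x, hxmem, hxneg⟩ := exists_neg_of_sum_neg hneg2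
    obtain ⟨hxne, hx'⟩ := Finset.mem_erase.mp hxmem
    simp only [hQ_def, Finset.mem_filter, Finset.mem_univ, true_and] at hx'
    obtain ⟨⟨hxCF, hxW, _⟩, hjn⟩ := hx'
    refine ⟨a, x, haCF, hxCF, lt_of_le_of_ne haW hane, lt_of_le_of_ne hxW hxne,
      haneg, hxneg, ?_⟩
    have := coe_jn M a x
    rw [hjn] at this
    rw [Set.union_comm]
    exact this.symm

end Final



theorem statement_16 (M : Matroid α) (e : α) (he : e ∈ M.E) :
    (∀ X : Finset α, CyclicFlat M ↑X → dgamma M e X < 0 →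
      (∃ ZX : Finset α, CyclicFlat M ↑ZX ∧ ZX ⊂ X ∧ 0 < dgamma M e ZX) →
      ∃ Z0 Z1 : Finset α, CyclicFlat M ↑Z0 ∧ CyclicFlat M ↑Z1 ∧ Z0 ⊂ X ∧ Z1 ⊂ X ∧
        0 < dgamma M e Z0 ∧ 0 < dgamma M e Z1 ∧
        M.closure (↑Z0 ∪ ↑Z1) = (↑X : Set α)) ∧
    (∀ W : Finset α, CyclicFlat M ↑W → 0 < dgamma M e W →
      ∃ Z0 Z1 : Finset α, CyclicFlat M ↑Z0 ∧ CyclicFlat M ↑Z1 ∧ Z0 ⊂ W ∧ Z1 ⊂ W ∧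
        dgamma M e Z0 < 0 ∧ dgamma M e Z1 < 0 ∧
        M.closure (↑Z0 ∪ ↑Z1) = (↑W : Set α)) :=
  statement_16' M e he

end Paper
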